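/- arXiv:2006.03142 — 6 statements merged into one kernel-verified Lean document; each statement's English description precedes it below -/
import Mathlib

section
/- Let x be a decision node with remaining supply t > 1 and let i be a buyer. Then the duopsony factors at the two successor nodes satisfy f_i(x + e_i) = max{f_i(x) − 1, 0} and f_i(x + e_{−i}) = min{f_i(x), t − 1}. -/
open Finset

noncomputable section

/-- The opponent of buyer `i`. -/
def other (i : Fin 2) : Fin 2 := 1 - i

/-- The standard unit vector of buyer `i`: winning one item moves `x` to `x + e i`. -/
def e (i : Fin 2) : Fin 2 → ℕ := Pi.single i 1

/-- Remaining supply `t(x) = T - x₁ - x₂` at node `x`. -/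
def supply (T : ℕ) (x : Fin 2 → ℕ) : ℕ := T - (x 0 + x 1)

/-- `x` is a decision node: `x₁ + x₂ < T`. -/
def IsDecision (T : ℕ) (x : Fin 2 → ℕ) : Prop := x 0 + x 1 < T

/-- Incremental value `v_i(k|x) = v_i(x_i + k)`. -/
def val (v : Fin 2 → ℕ → ℝ) (i : Fin 2) (k : ℕ) (x : Fin 2 → ℕ) : ℝ := v i (x i + k)

/-- Valuations are nonnegative and weakly decreasing. -/
def Admissible (v : Fin 2 → ℕ → ℝ) : Prop := ∀ i k, 0 ≤ v i k ∧ v i (k + 1) ≤ v i k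

/-- Greedy payoff `μ̄_i(k|x) = Σ_{j=1}^k v_i(j|x) - k · v_{-i}(t-k+1|x)`. -/
def gbar (T : ℕ) (v : Fin 2 → ℕ → ℝ) (i : Fin 2) (k : ℕ) (x : Fin 2 → ℕ) : ℝ :=
  (∑ j ∈ Finset.Icc 1 k, val v i j x) - (k : ℝ) * val v (other i) (supply T x - k + 1) x

/-- Greedy utility `μ_i(x) = max_{0 ≤ k ≤ t} μ̄_i(k|x)` (equal to `0` at terminal nodes). -/
def gu (T : ℕ) (v : Fin 2 → ℕ → ℝ) (i : Fin 2) (x : Fin 2 → ℕ) : ℝ :=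
  Finset.sup' (Finset.range (supply T x + 1)) Finset.nonempty_range_add_one
    (fun k => gbar T v i k x)

/-- Greedy demand `κ_i(x)`: the least `k ∈ {0,…,t}` attaining the greedy utility. -/
def gd (T : ℕ) (v : Fin 2 → ℕ → ℝ) (i : Fin 2) (x : Fin 2 → ℕ) : ℕ :=
  sInf {k | k ≤ supply T x ∧ gbar T v i k x = gu T v i x}

/-- Duopsony factor `f_i(x) = max ({k ∈ {1,…,t} : v_i(k|x) > v_{-i}(t-k+1|x)} ∪ {0})`. -/
def df (T : ℕ) (v : Fin 2 → ℕ → ℝ) (i : Fin 2) (x : Fin 2 → ℕ) : ℕ :=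
  sSup {k | 1 ≤ k ∧ k ≤ supply T x ∧
    val v (other i) (supply T x - k + 1) x < val v i k x}

/-- Baseline price `β_i(x)`. -/
def base (T : ℕ) (v : Fin 2 → ℕ → ℝ) (i : Fin 2) (x : Fin 2 → ℕ) : ℝ :=
  if df T v i x = 0 then val v i 1 x
  else val v (other i) (supply T x - gd T v i x + 1) x

/-- Threshold price `p_i(x) = v_i(1|x) + μ_i(x+e_i) - μ_i(x+e_{-i})`. -/
def tp (T : ℕ) (v : Fin 2 → ℕ → ℝ) (i : Fin 2) (x : Fin 2 → ℕ) : ℝ :=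
  val v i 1 x + gu T v i (x + e i) - gu T v i (x + e (other i))

section Aux

lemma other_ne' (i : Fin 2) : other i ≠ i := by fin_cases i <;> decide

lemma e_self' (i : Fin 2) : e i i = 1 := Pi.single_eq_same i 1

lemma e_other' (i j : Fin 2) (h : j ≠ i) : e i j = 0 := Pi.single_eq_of_ne h 1

lemma e_sum' (i : Fin 2) : e i 0 + e i 1 = 1 := by fin_cases i <;> simp [e]

lemma supply_succ' (T : ℕ) (x : Fin 2 → ℕ) (i : Fin 2) :
    supply T (x + e i) = supply T x - 1 := by
  have := e_sum' i
  simp only [supply, Pi.add_apply]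
  omega

lemma v_anti' (v : Fin 2 → ℕ → ℝ) (hv : Admissible v) (i : Fin 2) : Antitone (v i) :=
  antitone_nat_of_succ_le fun n => (hv i n).2

lemma S_dc' (T : ℕ) (v : Fin 2 → ℕ → ℝ) (hv : Admissible v) (i : Fin 2) (x : Fin 2 → ℕ)
    {k k' : ℕ} (h1 : 1 ≤ k') (hk : k' ≤ k)
    (hm : k ∈ {k | 1 ≤ k ∧ k ≤ supply T x ∧
      val v (other i) (supply T x - k + 1) x < val v i k x}) :
    k' ∈ {k | 1 ≤ k ∧ k ≤ supply T x ∧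
      val v (other i) (supply T x - k + 1) x < val v i k x} := by
  obtain ⟨-, h2, h3⟩ := hm
  refine ⟨h1, hk.trans h2, ?_⟩
  calc val v (other i) (supply T x - k' + 1) x
      ≤ val v (other i) (supply T x - k + 1) x := by
        unfold _root_.val
        exact v_anti' v hv (other i) (by omega)
    _ < val v i k x := h3
    _ ≤ val v i k' x := by
        unfold _root_.val
        exact v_anti' v hv i (by omega)

lemma mem_df_iff' (T : ℕ) (v : Fin 2 → ℕ → ℝ) (hv : Admissible v) (i : Fin 2) (x : Fin 2 → ℕ)
    (k : ℕ) :
    k ∈ {k | 1 ≤ k ∧ k ≤ supply T x ∧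
      val v (other i) (supply T x - k + 1) x < val v i k x} ↔
    1 ≤ k ∧ k ≤ df T v i x := by
  set A := {k | 1 ≤ k ∧ k ≤ supply T x ∧
      val v (other i) (supply T x - k + 1) x < val v i k x} with hA
  have hbdd : BddAbove A := ⟨supply T x, fun m hm => hm.2.1⟩
  constructor
  · intro h
    exact ⟨h.1, le_csSup hbdd h⟩
  · rintro ⟨h1, h2⟩
    have hne : A.Nonempty := by
      by_contra hne
      rw [Set.not_nonempty_iff_eq_empty] at hne
      have : df T v i x = 0 := by simp [df, ← hA, hne]
      omega
    exact S_dc' T v hv i x h1 h2 (Nat.sSup_mem hne hbdd)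

lemma sSup_eq_of_iff' (A : Set ℕ) (m : ℕ) (h : ∀ k, k ∈ A ↔ 1 ≤ k ∧ k ≤ m) :
    sSup A = m := by
  rcases Nat.eq_zero_or_pos m with rfl | hm
  · have : A = ∅ := by ext k; simp only [h, Set.mem_empty_iff_false, iff_false]; omega
    simp [this]
  · have hmm : m ∈ A := (h m).2 ⟨hm, le_rfl⟩
    exact le_antisymm (csSup_le ⟨m, hmm⟩ fun k hk => ((h k).1 hk).2)
      (le_csSup ⟨m, fun k hk => ((h k).1 hk).2⟩ hmm)

end Aux


/-- Evolution of the duopsony factor at the two successor nodes. -/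
theorem stmt0 (T : ℕ) (v : Fin 2 → ℕ → ℝ) (hv : Admissible v)
    (x : Fin 2 → ℕ) (hx : IsDecision T x) (ht : 1 < supply T x) (i : Fin 2) :
    df T v i (x + e i) = df T v i x - 1 ∧
    df T v i (x + e (other i)) = min (df T v i x) (supply T x - 1) := by
  have hsupp := supply_succ' T x i
  have hsupp' := supply_succ' T x (other i)
  have hoo : other i ≠ i := other_ne' i
  have hval1 : ∀ k, val v i k (x + e i) = val v i (k + 1) x := by
    intro k
    simp only [_root_.val, Pi.add_apply, e_self' i]
    congr 1
    omega
  have hval2 : ∀ m, val v (other i) m (x + e i) = val v (other i) m x := by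
    intro m
    simp only [_root_.val, Pi.add_apply, e_other' i (other i) hoo, add_zero]
  have hval3 : ∀ m, val v i m (x + e (other i)) = val v i m x := by
    intro m
    simp only [_root_.val, Pi.add_apply, e_other' (other i) i hoo.symm, add_zero]
  have hval4 : ∀ m, val v (other i) m (x + e (other i)) = val v (other i) (m + 1) x := by
    intro m
    simp only [_root_.val, Pi.add_apply, e_self' (other i)]
    congr 1
    omega
  constructor
  · apply sSup_eq_of_iff'
    intro k
    constructor
    · rintro ⟨h1, h2, h3⟩
      rw [hsupp] at h2
      rw [hval1, hval2, hsupp] at h3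
      have hk1 : k + 1 ∈ {k | 1 ≤ k ∧ k ≤ supply T x ∧
          val v (other i) (supply T x - k + 1) x < val v i k x} := by
        refine ⟨by omega, by omega, ?_⟩
        have : supply T x - 1 - k = supply T x - (k + 1) := by omega
        rw [this] at h3
        exact h3
      have := ((mem_df_iff' T v hv i x (k + 1)).1 hk1).2
      exact ⟨h1, by omega⟩
    · rintro ⟨h1, h2⟩
      have hk1 : k + 1 ∈ {k | 1 ≤ k ∧ k ≤ supply T x ∧
          val v (other i) (supply T x - k + 1) x < val v i k x} :=
        (mem_df_iff' T v hv i x (k + 1)).2 ⟨by omega, by omega⟩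
      obtain ⟨-, hle, hlt⟩ := hk1
      refine ⟨h1, by omega, ?_⟩
      rw [hval1, hval2, hsupp]
      have : supply T x - 1 - k = supply T x - (k + 1) := by omega
      rw [this]
      exact hlt
  · apply sSup_eq_of_iff'
    intro k
    constructor
    · rintro ⟨h1, h2, h3⟩
      rw [hsupp'] at h2
      rw [hval3, hval4, hsupp'] at h3
      have hk : k ∈ {k | 1 ≤ k ∧ k ≤ supply T x ∧
          val v (other i) (supply T x - k + 1) x < val v i k x} := by
        refine ⟨h1, by omega, ?_⟩
        have : supply T x - 1 - k + 1 + 1 = supply T x - k + 1 := by omega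
        rw [this] at h3
        exact h3
      have := ((mem_df_iff' T v hv i x k).1 hk).2
      exact ⟨h1, by omega⟩
    · rintro ⟨h1, h2⟩
      have hk : k ∈ {k | 1 ≤ k ∧ k ≤ supply T x ∧
          val v (other i) (supply T x - k + 1) x < val v i k x} :=
        (mem_df_iff' T v hv i x k).2 ⟨h1, by omega⟩
      obtain ⟨-, hle, hlt⟩ := hk
      refine ⟨h1, by omega, ?_⟩
      rw [hval3, hval4, hsupp']
      have : supply T x - 1 - k + 1 + 1 = supply T x - k + 1 := by omega
      rw [this]
      exact hlt
end
end

section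
/- Let x be a decision node and i a buyer with f_i(x) > 1 and κ_i(x) < t. Then β_i(x + e_i) ≥ p_i(x), and equality holds only if μ̄_i(κ_i(x+e_i) + 1 | x) = μ_i(x). Moreover, p_i(x + e_i) ≥ p_i(x). -/
open Finset

noncomputable section

namespace StmtAux

variable {T : ℕ} {v : Fin 2 → ℕ → ℝ} {i : Fin 2} {x : Fin 2 → ℕ}

lemma other_ne (i : Fin 2) : other i ≠ i := by fin_cases i <;> decide

lemma apply_e_self (x : Fin 2 → ℕ) (i : Fin 2) : (x + e i) i = x i + 1 := by
  simp [e]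

lemma apply_e_ne (x : Fin 2 → ℕ) {i j : Fin 2} (h : j ≠ i) : (x + e i) j = x j := by
  simp [e, Pi.single_eq_of_ne h]

lemma sum_e (x : Fin 2 → ℕ) (i : Fin 2) : (x + e i) 0 + (x + e i) 1 = x 0 + x 1 + 1 := by
  fin_cases i <;> simp [e, Pi.single_apply] <;> ring

lemma supply_e (x : Fin 2 → ℕ) (i : Fin 2) : supply T (x + e i) = supply T x - 1 := by
  unfold supply; rw [sum_e]; omega

lemma val_win_self (k : ℕ) : val v i k (x + e i) = val v i (k + 1) x := by
  unfold _root_.val; rw [apply_e_self]; congr 1; omega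

lemma val_ne (k : ℕ) {j : Fin 2} (h : j ≠ i) : val v j k (x + e i) = val v j k x := by
  unfold _root_.val; rw [apply_e_ne x h]

lemma v_anti (hv : Admissible v) (i : Fin 2) : Antitone (v i) :=
  antitone_nat_of_succ_le fun n => (hv i (n)).2

lemma val_anti (hv : Admissible v) {j k : ℕ} (h : j ≤ k) : val v i k x ≤ val v i j x :=
  v_anti hv i (by omega)

lemma sum_shift (f : ℕ → ℝ) (k : ℕ) :
    ∑ j ∈ Icc 1 k, f (j + 1) = (∑ j ∈ Icc 1 (k + 1), f j) - f 1 := by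
  induction k with
  | zero => simp
  | succ n ih =>
    rw [Finset.sum_Icc_succ_top (by omega : 1 ≤ n + 1), ih,
      Finset.sum_Icc_succ_top (by omega : 1 ≤ n + 1 + 1)]
    ring

lemma gbar_win (k : ℕ) (h : k + 1 ≤ supply T x) :
    gbar T v i k (x + e i)
      = gbar T v i (k + 1) x + val v (other i) (supply T x - k) x - val v i 1 x := by
  unfold gbar
  rw [supply_e]
  have h1 : ∑ j ∈ Icc 1 k, val v i j (x + e i)
      = (∑ j ∈ Icc 1 (k + 1), val v i j x) - val v i 1 x := by
    rw [Finset.sum_congr rfl fun j _ => val_win_self j]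
    exact sum_shift (fun j => val v i j x) k
  rw [h1, val_ne _ (other_ne i)]
  have h2 : supply T x - 1 - k + 1 = supply T x - k := by omega
  have h3 : supply T x - (k + 1) + 1 = supply T x - k := by omega
  rw [h2, h3]
  push_cast
  ring

lemma gbar_lose (k : ℕ) (h : k + 1 ≤ supply T x) :
    gbar T v i k (x + e (other i)) = gbar T v i k x := by
  unfold gbar
  rw [supply_e]
  have h1 : ∑ j ∈ Icc 1 k, val v i j (x + e (other i)) = ∑ j ∈ Icc 1 k, val v i j x :=
    Finset.sum_congr rfl fun j _ => val_ne j (other_ne i).symm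
  have h2 : val v (other i) (supply T x - 1 - k + 1) (x + e (other i))
      = val v (other i) (supply T x - k + 1) x := by
    rw [val_win_self]; congr 1; omega
  rw [h1, h2]

lemma gbar_zero : gbar T v i 0 x = 0 := by simp [gbar]

lemma le_gu {k : ℕ} (h : k ≤ supply T x) : gbar T v i k x ≤ gu T v i x :=
  Finset.le_sup' (fun k => gbar T v i k x) (Finset.mem_range.mpr (Nat.lt_succ_of_le h))

lemma gu_nonneg : 0 ≤ gu T v i x := gbar_zero (T := T) (v := v) (i := i) (x := x) ▸ le_gu (Nat.zero_le _)

lemma gd_mem : gd T v i x ≤ supply T x ∧ gbar T v i (gd T v i x) x = gu T v i x := by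
  have hne : {k | k ≤ supply T x ∧ gbar T v i k x = gu T v i x}.Nonempty := by
    obtain ⟨k, hk, hk2⟩ := Finset.exists_mem_eq_sup' (Finset.nonempty_range_add_one)
      (fun k => gbar T v i k x)
    exact ⟨k, Nat.lt_succ_iff.mp (Finset.mem_range.mp hk), hk2.symm⟩
  exact Nat.sInf_mem hne

lemma gu_lose (hlt : gd T v i x < supply T x) : gu T v i (x + e (other i)) = gu T v i x := by
  apply le_antisymm
  · apply Finset.sup'_le
    intro k hk
    have hk' : k < supply T (x + e (other i)) + 1 := Finset.mem_range.mp hk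
    rw [supply_e] at hk'
    have := gbar_lose (T := T) (v := v) (i := i) (x := x) k (by omega)
    simp only [this]
    exact le_gu (by omega)
  · obtain ⟨h1, h2⟩ := gd_mem (T := T) (v := v) (i := i) (x := x)
    rw [← h2, ← gbar_lose _ (by omega)]
    apply le_gu
    rw [supply_e]; omega

lemma df_spec (hf : 0 < df T v i x) :
    1 ≤ df T v i x ∧ df T v i x ≤ supply T x ∧
      val v (other i) (supply T x - df T v i x + 1) x < val v i (df T v i x) x := by
  have hbdd : BddAbove {k | 1 ≤ k ∧ k ≤ supply T x ∧
      val v (other i) (supply T x - k + 1) x < val v i k x} :=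
    ⟨supply T x, fun k hk => hk.2.1⟩
  have hne : {k | 1 ≤ k ∧ k ≤ supply T x ∧
      val v (other i) (supply T x - k + 1) x < val v i k x}.Nonempty := by
    by_contra h
    rw [Set.not_nonempty_iff_eq_empty] at h
    unfold df at hf
    rw [h] at hf
    simp at hf
  exact Nat.sSup_mem hne hbdd

lemma df_win_ne (hf : 1 < df T v i x) : df T v i (x + e i) ≠ 0 := by
  obtain ⟨h1, h2, h3⟩ := df_spec (T := T) (v := v) (i := i) (x := x) (by omega)
  have hmem : df T v i x - 1 ∈ {k | 1 ≤ k ∧ k ≤ supply T (x + e i) ∧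
      val v (other i) (supply T (x + e i) - k + 1) (x + e i) < val v i k (x + e i)} := by
    refine ⟨by omega, by rw [supply_e]; omega, ?_⟩
    rw [supply_e, val_ne _ (other_ne i), val_win_self]
    have e1 : supply T x - 1 - (df T v i x - 1) + 1 = supply T x - df T v i x + 1 := by omega
    have e2 : df T v i x - 1 + 1 = df T v i x := by omega
    rw [e1, e2]; exact h3
  have hle : df T v i x - 1 ≤ df T v i (x + e i) := by
    unfold df
    exact le_csSup ⟨supply T (x + e i), fun k hk => hk.2.1⟩ hmem
  omega

lemma gbar_one (h : 1 ≤ supply T x) :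
    gbar T v i 1 x = val v i 1 x - val v (other i) (supply T x) x := by
  unfold gbar
  rw [show supply T x - 1 + 1 = supply T x by omega]
  simp

end StmtAux

/-- Evolution of the threshold price upon winning. -/
theorem stmt7 (T : ℕ) (v : Fin 2 → ℕ → ℝ) (hv : Admissible v)
    (x : Fin 2 → ℕ) (hx : IsDecision T x) (i : Fin 2)
    (hf : 1 < df T v i x) (hk : gd T v i x < supply T x) :
    tp T v i x ≤ base T v i (x + e i) ∧
    (base T v i (x + e i) = tp T v i x →
      gbar T v i (gd T v i (x + e i) + 1) x = gu T v i x) ∧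
    tp T v i x ≤ tp T v i (x + e i) := by
  obtain ⟨hf1, hf2, hf3⟩ := StmtAux.df_spec (T := T) (v := v) (i := i) (x := x) (by omega)
  have ht2 : 2 ≤ supply T x := le_trans hf hf2
  obtain ⟨hκle, hκeq⟩ := StmtAux.gd_mem (T := T) (v := v) (i := i) (x := x + e i)
  have hsx' : supply T (x + e i) = supply T x - 1 := StmtAux.supply_e x i
  rw [hsx'] at hκle
  -- greedy utility after winning
  have hwin := StmtAux.gbar_win (T := T) (v := v) (i := i) (x := x)
    (gd T v i (x + e i)) (by omega)
  have hguwin : gu T v i (x + e i)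
      = gbar T v i (gd T v i (x + e i) + 1) x
        + val v (other i) (supply T x - gd T v i (x + e i)) x - val v i 1 x := by
    rw [← hκeq, hwin]
  -- greedy utility after losing
  have hlose : gu T v i (x + e (other i)) = gu T v i x := StmtAux.gu_lose hk
  -- threshold price formula
  have htp : tp T v i x
      = gbar T v i (gd T v i (x + e i) + 1) x
        + val v (other i) (supply T x - gd T v i (x + e i)) x - gu T v i x := by
    unfold tp; rw [hguwin, hlose]; ring
  -- baseline price formula
  have hdfne : df T v i (x + e i) ≠ 0 := StmtAux.df_win_ne hf
  have hbase : base T v i (x + e i)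
      = val v (other i) (supply T x - gd T v i (x + e i)) x := by
    unfold base
    rw [if_neg hdfne, hsx', StmtAux.val_ne _ (StmtAux.other_ne i)]
    congr 1; omega
  have hle1 : gbar T v i (gd T v i (x + e i) + 1) x ≤ gu T v i x :=
    StmtAux.le_gu (by omega)
  refine ⟨by rw [htp, hbase]; linarith,
    fun heq => by rw [hbase, htp] at heq; linarith, ?_⟩
  -- Part 3 : the threshold price weakly increases upon winning.
  have hlose' : gu T v i ((x + e i) + e (other i)) ≤ gu T v i (x + e i) := by
    apply Finset.sup'_le
    intro k hkm
    have hk1 : k < supply T ((x + e i) + e (other i)) + 1 := Finset.mem_range.mp hkm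
    rw [StmtAux.supply_e, hsx'] at hk1
    have hgl := StmtAux.gbar_lose (T := T) (v := v) (i := i) (x := x + e i) k
      (by rw [hsx']; omega)
    simp only [hgl]
    exact StmtAux.le_gu (by rw [hsx']; omega)
  have hbound : ∀ k : ℕ, k + 1 ≤ supply T x - 1 →
      gbar T v i (k + 1) (x + e i) + val v (other i) (supply T x - (k + 1)) x
        - gu T v i (x + e i) ≤ tp T v i (x + e i) := by
    intro k hk2
    have hw := StmtAux.gbar_win (T := T) (v := v) (i := i) (x := x + e i) k
      (by rw [hsx']; omega)
    rw [hsx', StmtAux.val_ne _ (StmtAux.other_ne i),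
      (by omega : supply T x - 1 - k = supply T x - (k + 1))] at hw
    have hle := StmtAux.le_gu (T := T) (v := v) (i := i) (x := (x + e i) + e i) (k := k)
      (by rw [StmtAux.supply_e, hsx']; omega)
    rw [hw] at hle
    unfold tp
    linarith [hlose']
  rcases Nat.eq_zero_or_pos (gd T v i (x + e i)) with hκ0 | hκ1
  · -- demand after winning is zero
    have hgu0 : gu T v i (x + e i) = 0 := by
      rw [← hκeq, hκ0, StmtAux.gbar_zero]
    have hb := hbound 0 (by omega)
    rw [hgu0] at hb
    have h1 : gbar T v i (0 + 1) (x + e i)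
        = val v i 2 x - val v (other i) (supply T x - 1) x := by
      have := StmtAux.gbar_one (T := T) (v := v) (i := i) (x := x + e i)
        (by rw [hsx']; omega)
      rw [this, hsx', StmtAux.val_win_self, StmtAux.val_ne _ (StmtAux.other_ne i)]
    rw [h1] at hb
    -- tp x ≤ val v (other i) (supply T x) x < val v i 2 x ≤ tp (x + e i)
    have h2 : val v (other i) (supply T x) x
        ≤ val v (other i) (supply T x - df T v i x + 1) x :=
      StmtAux.val_anti hv (by omega)
    have h3 : val v i (df T v i x) x ≤ val v i 2 x := StmtAux.val_anti hv (by omega)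
    have h4 : supply T x - gd T v i (x + e i) = supply T x := by omega
    rw [htp, h4]
    have h5 : 0 ≤ gu T v i x := StmtAux.gu_nonneg
    have h6 : gbar T v i (gd T v i (x + e i) + 1) x ≤ gu T v i x := hle1
    linarith
  · -- demand after winning is positive
    have hb := hbound (gd T v i (x + e i) - 1) (by omega)
    rw [(by omega : gd T v i (x + e i) - 1 + 1 = gd T v i (x + e i)), hκeq] at hb
    rw [htp]
    linarith
end
end

section
/- In the no-overbidding equilibrium with any tie-breaking rule, for every decision node x and every buyer i, the price paid at x satisfies p(x) ≤ v_i(1|x) + u_i(x + e_i) − u_i(x). -/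
open Finset

noncomputable section

/-- A tie-breaking rule: probabilities assigned to the two buyers at each decision node. -/
def TieBreaking (T : ℕ) (π : Fin 2 → (Fin 2 → ℕ) → ℝ) : Prop :=
  ∀ x : Fin 2 → ℕ, IsDecision T x →
    (∀ i, 0 ≤ π i x ∧ π i x ≤ 1) ∧ π 0 x + π 1 x = 1

/-- The no-overbidding equilibrium for the tie-breaking rule `π`, described by its
forward utilities `u`, bids `b` and winning probabilities `q`, which satisfy the
defining backward recursion. -/
structure Equilibrium (T : ℕ) (v : Fin 2 → ℕ → ℝ) (π : Fin 2 → (Fin 2 → ℕ) → ℝ) where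
  u : Fin 2 → (Fin 2 → ℕ) → ℝ
  b : Fin 2 → (Fin 2 → ℕ) → ℝ
  q : Fin 2 → (Fin 2 → ℕ) → ℝ
  u_terminal : ∀ i x, ¬ IsDecision T x → u i x = 0
  bid_def : ∀ i x, IsDecision T x →
    b i x = min (val v i 1 x) (val v i 1 x + u i (x + e i) - u i (x + e (other i)))
  q_win : ∀ i x, IsDecision T x → b (other i) x < b i x → q i x = 1
  q_lose : ∀ i x, IsDecision T x → b i x < b (other i) x → q i x = 0
  q_tie : ∀ i x, IsDecision T x → b i x = b (other i) x → q i x = π i x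
  u_def : ∀ i x, IsDecision T x →
    u i x = q i x * (val v i 1 x - b (other i) x + u i (x + e i))
            + (1 - q i x) * u i (x + e (other i))

/-- The price paid at node `x`: the lower of the two bids. -/
def price {T : ℕ} {v : Fin 2 → ℕ → ℝ} {π : Fin 2 → (Fin 2 → ℕ) → ℝ}
    (E : Equilibrium T v π) (x : Fin 2 → ℕ) : ℝ := min (E.b 0 x) (E.b 1 x)

/-- Bound on the price paid at a decision node in the no-overbidding equilibrium. -/
theorem stmt10 (T : ℕ) (v : Fin 2 → ℕ → ℝ) (π : Fin 2 → (Fin 2 → ℕ) → ℝ)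
    (hv : Admissible v) (hπ : TieBreaking T π) (E : Equilibrium T v π)
    (x : Fin 2 → ℕ) (hx : IsDecision T x) (i : Fin 2) :
    price E x ≤ val v i 1 x + E.u i (x + e i) - E.u i x := by
  have hbd := E.bid_def i x hx
  have hud := E.u_def i x hx
  have hq : 0 ≤ E.q i x ∧ E.q i x ≤ 1 := by
    rcases lt_trichotomy (E.b i x) (E.b (other i) x) with h | h | h
    · rw [E.q_lose i x hx h]; norm_num
    · rw [E.q_tie i x hx h]; exact (hπ x hx).1 i
    · rw [E.q_win i x hx h]; norm_num
  have hA : E.b i x ≤ val v i 1 x + E.u i (x + e i) - E.u i (x + e (other i)) := by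
    rw [hbd]; exact min_le_right _ _
  have hmin_i : price E x ≤ E.b i x := by
    fin_cases i
    · exact min_le_left _ _
    · exact min_le_right _ _
  have hmin_o : price E x ≤ E.b (other i) x := by
    fin_cases i
    · exact min_le_right _ _
    · exact min_le_left _ _
  rw [hud]
  nlinarith [hq.1, hq.2, hmin_i, hmin_o, hA,
    mul_le_mul_of_nonneg_left hmin_o hq.1,
    mul_le_mul_of_nonneg_left (le_trans hmin_i hA) (sub_nonneg.mpr hq.2)]
end
end

section
/- Characterisation of optimal allocations: for every decision node x and every integer k ∈ {0,…,t}, the allocation giving k of the t remaining items to buyer 1 is welfare-optimal, SW(k|x) = OPT(x), if and only if f_1(x) ≤ k ≤ t − f_2(x). In particular, f_1(x) ≤ t − f_2(x). -/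
open Finset

noncomputable section

/-- Social welfare of awarding `k` of the `t` remaining items to buyer 1. -/
def sw (T : ℕ) (v : Fin 2 → ℕ → ℝ) (k : ℕ) (x : Fin 2 → ℕ) : ℝ :=
  (∑ i ∈ Finset.Icc 1 k, val v 0 i x) + (∑ i ∈ Finset.Icc 1 (supply T x - k), val v 1 i x)

/-- Optimal social welfare `OPT(x) = max_{0 ≤ k ≤ t} SW(k|x)`. -/
def opt (T : ℕ) (v : Fin 2 → ℕ → ℝ) (x : Fin 2 → ℕ) : ℝ :=
  Finset.sup' (Finset.range (supply T x + 1)) Finset.nonempty_range_add_one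
    (fun k => sw T v k x)

/-- Characterisation of welfare-optimal allocations via the duopsony factors. -/
theorem stmt13 (T : ℕ) (v : Fin 2 → ℕ → ℝ) (hv : Admissible v)
    (x : Fin 2 → ℕ) (hx : IsDecision T x) :
    (∀ k, k ≤ supply T x →
      (sw T v k x = opt T v x ↔
        df T v 0 x ≤ k ∧ k ≤ supply T x - df T v 1 x)) ∧
    df T v 0 x ≤ supply T x - df T v 1 x := by

  classical
  set t := supply T x with ht
  -- v i is weakly decreasing
  have hdec : ∀ (i : Fin 2) (a b : ℕ), a ≤ b → v i b ≤ v i a := by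
    intro i a b hab
    induction b with
    | zero => interval_cases a; exact le_refl _
    | succ n ih =>
      rcases Nat.lt_or_ge a (n + 1) with h | h
      · exact (hv i n).2.trans (ih (by omega))
      · have hab' : a = n + 1 := by omega
        subst hab'; exact le_refl _
  set d : ℕ → ℝ := fun k => val v 0 (k + 1) x - val v 1 (t - k) x with hd
  have hanti : ∀ j k : ℕ, j ≤ k → d k ≤ d j := by
    intro j k hjk
    have h1 : v 0 (x 0 + (k + 1)) ≤ v 0 (x 0 + (j + 1)) := hdec 0 _ _ (by omega)
    have h2 : v 1 (x 1 + (t - j)) ≤ v 1 (x 1 + (t - k)) := hdec 1 _ _ (by omega)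
    simp only [hd, _root_.val]
    linarith
  have hstep : ∀ k, k < t → sw T v (k + 1) x = sw T v k x + d k := by
    intro k hk
    have e1 : (∑ i ∈ Finset.Icc 1 (k + 1), val v 0 i x)
        = (∑ i ∈ Finset.Icc 1 k, val v 0 i x) + val v 0 (k + 1) x :=
      Finset.sum_Icc_succ_top (by omega) _
    have e2 : t - k = (t - (k + 1)) + 1 := by omega
    have e3 : (∑ i ∈ Finset.Icc 1 (t - k), val v 1 i x)
        = (∑ i ∈ Finset.Icc 1 (t - (k + 1)), val v 1 i x) + val v 1 (t - k) x := by
      rw [e2, Finset.sum_Icc_succ_top (by omega), ← e2]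
    simp only [sw, ← ht, e1, e3, hd]
    ring
  have hsum : ∀ k, k ≤ t → sw T v k x = sw T v 0 x + ∑ i ∈ Finset.range k, d i := by
    intro k hk
    induction k with
    | zero => simp
    | succ n ih =>
      rw [hstep n (by omega), ih (by omega), Finset.sum_range_succ]; ring
  have hcomp1 : ∀ j k : ℕ, j ≤ k → k ≤ t → 0 ≤ d (k - 1) → sw T v j x ≤ sw T v k x := by
    intro j k hjk hkt hdk
    rw [hsum j (by omega), hsum k hkt, ← Finset.sum_range_add_sum_Ico _ hjk]
    have h0 : 0 ≤ ∑ i ∈ Finset.Ico j k, d i := by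
      apply Finset.sum_nonneg
      intro i hi
      have hik : i ≤ k - 1 := by have := (Finset.mem_Ico.1 hi).2; omega
      exact hdk.trans (hanti i (k - 1) hik)
    linarith
  have hcomp2 : ∀ j k : ℕ, k ≤ j → j ≤ t → d k ≤ 0 → sw T v j x ≤ sw T v k x := by
    intro j k hkj hjt hdk
    rw [hsum j hjt, hsum k (by omega), ← Finset.sum_range_add_sum_Ico _ hkj]
    have h0 : (∑ i ∈ Finset.Ico k j, d i) ≤ 0 := by
      apply Finset.sum_nonpos
      intro i hi
      have hik : k ≤ i := (Finset.mem_Ico.1 hi).1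
      exact (hanti k i hik).trans hdk
    linarith
  have hle_opt : ∀ k, k ≤ t → sw T v k x ≤ opt T v x := by
    intro k hk
    exact Finset.le_sup' (fun k => sw T v k x) (Finset.mem_range.2 (by omega))
  have hopt_iff : ∀ k, k ≤ t →
      (sw T v k x = opt T v x ↔ ∀ j, j ≤ t → sw T v j x ≤ sw T v k x) := by
    intro k hk
    constructor
    · intro h j hj
      rw [h]; exact hle_opt j hj
    · intro H
      refine le_antisymm (hle_opt k hk) ?_
      apply Finset.sup'_le
      intro j hj
      exact H j (by have := Finset.mem_range.1 hj; omega)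
  -- characterize optimality via d
  have hchar : ∀ k, k ≤ t →
      ((∀ j, j ≤ t → sw T v j x ≤ sw T v k x) ↔
        ((k = t ∨ d k ≤ 0) ∧ (k = 0 ∨ 0 ≤ d (k - 1)))) := by
    intro k hk
    constructor
    · intro H
      constructor
      · rcases eq_or_lt_of_le hk with h | h
        · exact Or.inl h
        · right
          have h1 := H (k + 1) (by omega)
          have h2 := hstep k h
          linarith
      · rcases Nat.eq_zero_or_pos k with h | h
        · exact Or.inl h
        · right
          have h1 := H (k - 1) (by omega)
          have h2 := hstep (k - 1) (by omega)
          rw [Nat.sub_add_cancel h] at h2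
          linarith
    · rintro ⟨h1, h2⟩ j hj
      rcases le_or_gt j k with hjk | hjk
      · rcases h2 with h2 | h2
        · have : j = 0 := by omega
          subst this; subst h2; exact le_refl _
        · exact hcomp1 j k hjk hk h2
      · rcases h1 with h1 | h1
        · omega
        · exact hcomp2 j k (by omega) hj h1
  -- duopsony factor 0
  have hother0 : other 0 = (1 : Fin 2) := by decide
  have hother1 : other 1 = (0 : Fin 2) := by decide
  have hS0 : ∀ m : ℕ,
      (1 ≤ m ∧ m ≤ supply T x ∧ val v (other 0) (supply T x - m + 1) x < val v 0 m x) ↔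
      (1 ≤ m ∧ m ≤ t ∧ 0 < d (m - 1)) := by
    intro m
    rw [← ht, hother0]
    constructor
    · rintro ⟨h1, h2, h3⟩
      refine ⟨h1, h2, ?_⟩
      have e1 : m - 1 + 1 = m := by omega
      have e2 : t - (m - 1) = t - m + 1 := by omega
      simp only [hd, e1, e2]
      linarith
    · rintro ⟨h1, h2, h3⟩
      refine ⟨h1, h2, ?_⟩
      have e1 : m - 1 + 1 = m := by omega
      have e2 : t - (m - 1) = t - m + 1 := by omega
      simp only [hd, e1, e2] at h3
      linarith
  have hS1 : ∀ m : ℕ,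
      (1 ≤ m ∧ m ≤ supply T x ∧ val v (other 1) (supply T x - m + 1) x < val v 1 m x) ↔
      (1 ≤ m ∧ m ≤ t ∧ d (t - m) < 0) := by
    intro m
    rw [← ht, hother1]
    constructor
    · rintro ⟨h1, h2, h3⟩
      refine ⟨h1, h2, ?_⟩
      have e1 : t - m + 1 = t - m + 1 := rfl
      have e2 : t - (t - m) = m := by omega
      simp only [hd, e2]
      linarith
    · rintro ⟨h1, h2, h3⟩
      refine ⟨h1, h2, ?_⟩
      have e2 : t - (t - m) = m := by omega
      simp only [hd, e2] at h3
      linarith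
  have hdf0 : ∀ k, k ≤ t → (df T v 0 x ≤ k ↔ (k = t ∨ d k ≤ 0)) := by
    intro k hk
    unfold df
    constructor
    · intro h
      by_contra hcon
      push_neg at hcon
      obtain ⟨hk1, hk2⟩ := hcon
      have hmem : (k + 1) ∈ {m | 1 ≤ m ∧ m ≤ supply T x ∧
          val v (other 0) (supply T x - m + 1) x < val v 0 m x} := by
        rw [Set.mem_setOf_eq, hS0]
        refine ⟨by omega, by omega, ?_⟩
        simpa using hk2
      have hbdd : BddAbove {m | 1 ≤ m ∧ m ≤ supply T x ∧
          val v (other 0) (supply T x - m + 1) x < val v 0 m x} :=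
        ⟨t, fun m hm => by rw [Set.mem_setOf_eq, hS0] at hm; exact hm.2.1⟩
      have := le_csSup hbdd hmem
      omega
    · intro h
      apply csSup_le'
      intro m hm
      rw [Set.mem_setOf_eq, hS0] at hm
      obtain ⟨h1, h2, h3⟩ := hm
      by_contra hc
      push_neg at hc
      rcases h with h | h
      · omega
      · have : d (m - 1) ≤ d k := hanti k (m - 1) (by omega)
        linarith
  have hdf1le : df T v 1 x ≤ t := by
    unfold df
    apply csSup_le'
    intro m hm
    rw [Set.mem_setOf_eq, hS1] at hm
    exact hm.2.1
  have hdf1 : ∀ k, k ≤ t → (k ≤ t - df T v 1 x ↔ (k = 0 ∨ 0 ≤ d (k - 1))) := by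
    intro k hk
    have key : df T v 1 x ≤ t - k ↔ (k = 0 ∨ 0 ≤ d (k - 1)) := by
      unfold df
      constructor
      · intro h
        rcases Nat.eq_zero_or_pos k with h0 | h0
        · exact Or.inl h0
        · right
          by_contra hc
          push_neg at hc
          have hmem : (t - k + 1) ∈ {m | 1 ≤ m ∧ m ≤ supply T x ∧
              val v (other 1) (supply T x - m + 1) x < val v 1 m x} := by
            rw [Set.mem_setOf_eq, hS1]
            refine ⟨by omega, by omega, ?_⟩
            have e : t - (t - k + 1) = k - 1 := by omega
            rw [e]
            linarith
          have hbdd : BddAbove {m | 1 ≤ m ∧ m ≤ supply T x ∧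
              val v (other 1) (supply T x - m + 1) x < val v 1 m x} :=
            ⟨t, fun m hm => by rw [Set.mem_setOf_eq, hS1] at hm; exact hm.2.1⟩
          have := le_csSup hbdd hmem
          omega
      · intro h
        apply csSup_le'
        intro m hm
        rw [Set.mem_setOf_eq, hS1] at hm
        obtain ⟨h1, h2, h3⟩ := hm
        rcases h with h | h
        · omega
        · by_contra hc
          push_neg at hc
          have : d (k - 1) ≤ d (t - m) := hanti (t - m) (k - 1) (by omega)
          linarith
    have hb := hdf1le
    have h2 : k ≤ t - df T v 1 x ↔ df T v 1 x ≤ t - k := by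
      constructor <;> (intro h; omega)
    rw [h2, key]
  -- main iff
  have hmain : ∀ k, k ≤ t →
      (sw T v k x = opt T v x ↔ df T v 0 x ≤ k ∧ k ≤ t - df T v 1 x) := by
    intro k hk
    rw [hopt_iff k hk, hchar k hk, ← hdf0 k hk, ← hdf1 k hk]
  refine ⟨fun k hk => hmain k hk, ?_⟩
  obtain ⟨k0, hk0mem, hk0⟩ := Finset.exists_mem_eq_sup'
    (Finset.nonempty_range_add_one (n := supply T x)) (fun k => sw T v k x)
  have hk0t : k0 ≤ t := by
    have := Finset.mem_range.1 hk0mem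
    omega
  have hopt0 : sw T v k0 x = opt T v x := by
    rw [opt]; exact hk0.symm
  have hres := (hmain k0 hk0t).1 hopt0
  omega
end
end

section
/- Suppose buyer 1 is a strict monopsonist at a decision node x, i.e. f_1(x) = t. Then for every real number k ∈ (0, t], μ_1(x) ≥ ∫_0^k v̄_1(τ|x) dτ − k·v̄_2(t − k | x). -/
open Finset

noncomputable section

/-- Real extension of buyer 1's incremental valuation at `x`: `v̄₁(τ|x) = v₁(⌈τ⌉|x)`. -/
def rv1 (v : Fin 2 → ℕ → ℝ) (x : Fin 2 → ℕ) (τ : ℝ) : ℝ := v 0 (x 0 + ⌈τ⌉₊)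

/-- Real extension of buyer 2's incremental valuation at `x`: `v̄₂(τ|x) = v₂(⌊τ⌋+1|x)`. -/
def rv2 (v : Fin 2 → ℕ → ℝ) (x : Fin 2 → ℕ) (τ : ℝ) : ℝ := v 1 (x 1 + ⌊τ⌋₊ + 1)

lemma rv1_antitone (v : Fin 2 → ℕ → ℝ) (hv : Admissible v) (x : Fin 2 → ℕ) :
    Antitone (rv1 v x) := fun a b hab =>
  antitone_nat_of_succ_le (fun k => (hv 0 k).2)
    (Nat.add_le_add_left (Nat.ceil_mono hab) _)

lemma step_int (v : Fin 2 → ℕ → ℝ) (x : Fin 2 → ℕ) (j : ℕ) (hj : 1 ≤ j)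
    (a b : ℝ) (ha : (j : ℝ) - 1 ≤ a) (hab : a ≤ b) (hb : b ≤ j) :
    ∫ τ in a..b, rv1 v x τ = (b - a) * v 0 (x 0 + j) := by
  have hcong : ∫ τ in a..b, rv1 v x τ = ∫ _ in a..b, v 0 (x 0 + j) := by
    refine intervalIntegral.integral_congr_ae (Filter.Eventually.of_forall fun τ hτ => ?_)
    rw [Set.uIoc_of_le hab] at hτ
    have hceil : ⌈τ⌉₊ = j := by
      rw [Nat.ceil_eq_iff (by omega)]
      refine ⟨?_, le_trans hτ.2 hb⟩
      rw [Nat.cast_sub hj]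
      exact lt_of_le_of_lt (by push_cast; linarith) hτ.1
    simp [rv1, hceil]
  rw [hcong, intervalIntegral.integral_const, smul_eq_mul]

lemma cum_int (v : Fin 2 → ℕ → ℝ) (hv : Admissible v) (x : Fin 2 → ℕ) (m : ℕ) :
    ∫ τ in (0:ℝ)..(m:ℝ), rv1 v x τ = ∑ j ∈ Finset.Icc 1 m, v 0 (x 0 + j) := by
  induction m with
  | zero => simp
  | succ m ih =>
    have h1 : IntervalIntegrable (rv1 v x) MeasureTheory.volume 0 m :=
      (rv1_antitone v hv x).intervalIntegrable
    have h2 : IntervalIntegrable (rv1 v x) MeasureTheory.volume (m : ℝ) ((m:ℝ)+1) :=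
      (rv1_antitone v hv x).intervalIntegrable
    have hadd := intervalIntegral.integral_add_adjacent_intervals h1 h2
    have hstep : ∫ τ in (m:ℝ)..((m:ℝ)+1), rv1 v x τ = (((m:ℝ)+1) - m) * v 0 (x 0 + (m+1)) :=
      step_int v x (m+1) (by omega) m ((m:ℝ)+1) (by push_cast; linarith)
        (by linarith) (by push_cast; linarith)
    have hc : ((m+1 : ℕ) : ℝ) = (m:ℝ) + 1 := by push_cast; ring
    rw [hc, ← hadd, ih, hstep, Finset.sum_Icc_succ_top (by omega : 1 ≤ m + 1)]
    ring

/-- A strict monopsonist's greedy utility dominates the payoff of any fractional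
greedy strategy. -/
theorem stmt16 (T : ℕ) (v : Fin 2 → ℕ → ℝ) (hv : Admissible v)
    (x : Fin 2 → ℕ) (hx : IsDecision T x)
    (hmono : df T v 0 x = supply T x)
    (k : ℝ) (hk0 : 0 < k) (hk1 : k ≤ (supply T x : ℝ)) :
    (∫ τ in (0:ℝ)..k, rv1 v x τ) - k * rv2 v x ((supply T x : ℝ) - k)
      ≤ gu T v 0 x := by
  set t := supply T x with ht
  obtain ⟨m, hm⟩ : ∃ m, ⌈k⌉₊ = m + 1 := by
    have : 0 < ⌈k⌉₊ := Nat.ceil_pos.mpr hk0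
    exact ⟨⌈k⌉₊ - 1, by omega⟩
  have hk_le : k ≤ (m:ℝ) + 1 := by
    have := Nat.le_ceil k; rw [hm] at this; push_cast at this; linarith
  have hk_gt : (m:ℝ) < k := Nat.lt_ceil.mp (by omega)
  have hmt : m + 1 ≤ t := by rw [← hm]; exact Nat.ceil_le.mpr hk1
  -- compute the integral
  have h1 : IntervalIntegrable (rv1 v x) MeasureTheory.volume 0 m :=
    (rv1_antitone v hv x).intervalIntegrable
  have h2 : IntervalIntegrable (rv1 v x) MeasureTheory.volume (m : ℝ) k :=
    (rv1_antitone v hv x).intervalIntegrable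
  have hsplit : ∫ τ in (0:ℝ)..k, rv1 v x τ =
      (∫ τ in (0:ℝ)..(m:ℝ), rv1 v x τ) + ∫ τ in (m:ℝ)..k, rv1 v x τ :=
    (intervalIntegral.integral_add_adjacent_intervals h1 h2).symm
  have hlast : ∫ τ in (m:ℝ)..k, rv1 v x τ = (k - m) * v 0 (x 0 + (m+1)) :=
    step_int v x (m+1) (by omega) m k (by push_cast; linarith) hk_gt.le
      (by push_cast; linarith)
  have hcum := cum_int v hv x m
  -- compute rv2 at t - k
  have hfl : ⌊(t:ℝ) - k⌋₊ = t - (m+1) := by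
    rw [Nat.floor_eq_iff (by linarith)]
    rw [Nat.cast_sub hmt]
    push_cast
    constructor <;> linarith
  have hrv2 : rv2 v x ((t:ℝ) - k) = v 1 (x 1 + (t - (m+1)) + 1) := by
    simp [rv2, hfl]
  -- antitone of v
  have hanti : ∀ i : Fin 2, Antitone (v i) := fun i =>
    antitone_nat_of_succ_le (fun j => (hv i j).2)
  -- gbar bounds
  have hle : ∀ j, j ≤ t → gbar T v 0 j x ≤ gu T v 0 x := fun j hj =>
    Finset.le_sup' (fun j => gbar T v 0 j x) (Finset.mem_range.mpr (by omega))
  have hoth : other 0 = 1 := by decide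
  have hgb1 : gbar T v 0 (m+1) x = (∑ j ∈ Finset.Icc 1 m, v 0 (x 0 + j))
      + v 0 (x 0 + (m+1)) - ((m:ℝ)+1) * v 1 (x 1 + (t - (m+1)) + 1) := by
    rw [gbar, Finset.sum_Icc_succ_top (by omega : 1 ≤ m + 1)]
    simp only [_root_.val, hoth, ← ht]
    rw [show x 1 + (t - (m+1) + 1) = x 1 + (t - (m+1)) + 1 from by omega]
    push_cast
    ring
  have hgb0 : (∑ j ∈ Finset.Icc 1 m, v 0 (x 0 + j))
      - (m:ℝ) * v 1 (x 1 + (t - (m+1)) + 1) ≤ gbar T v 0 m x := by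
    rw [gbar]
    simp only [_root_.val, hoth, ← ht]
    have hVle : v 1 (x 1 + (t - m + 1)) ≤ v 1 (x 1 + (t - (m+1)) + 1) :=
      hanti 1 (by omega)
    have := mul_le_mul_of_nonneg_left hVle (Nat.cast_nonneg (α := ℝ) m)
    linarith
  have hA : (∑ j ∈ Finset.Icc 1 m, v 0 (x 0 + j))
      - (m:ℝ) * v 1 (x 1 + (t - (m+1)) + 1) ≤ gu T v 0 x :=
    le_trans hgb0 (hle m (by omega))
  have hB : (∑ j ∈ Finset.Icc 1 m, v 0 (x 0 + j))
      + v 0 (x 0 + (m+1)) - ((m:ℝ)+1) * v 1 (x 1 + (t - (m+1)) + 1) ≤ gu T v 0 x := by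
    rw [← hgb1]; exact hle (m+1) hmt
  rw [hsplit, hlast, hcum, hrv2]
  nlinarith [mul_nonneg (by linarith : (0:ℝ) ≤ 1 - (k - m)) (sub_nonneg.mpr hA),
    mul_nonneg (by linarith : (0:ℝ) ≤ k - m) (sub_nonneg.mpr hB)]
end
end

section
/- Tightness of the price of anarchy bound: for each integer T ≥ 1 define v_1^T(i) = 1 and v_2^T(i) = max{ (⌊T(1−1/e)⌋ − i + 1)/(T − i + 1), 0 } for i ∈ {1,…,T}. Then v_1^T and v_2^T are nonnegative and weakly decreasing, buyer 1 is a strict monopsonist at the initial node (f_1(0) = T), her greedy demand there is κ_1(0) = T − ⌊T(1−1/e)⌋, OPT(0) = T, and the efficiency of the allocation awarding buyer 1 exactly κ_1(0) items tends to 1 − 1/e, i.e. lim_{T→∞} SW(κ_1(0) | 0)/T = 1 − 1/e. -/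
open Finset

noncomputable section

/-- The valuation profile witnessing tightness of the `1 - 1/e` bound:
`v₁(i) = 1` and `v₂(i) = max{(⌊T(1-1/e)⌋ - i + 1)/(T - i + 1), 0}`. -/
def vT (T : ℕ) : Fin 2 → ℕ → ℝ := fun i k =>
  if i = 0 then 1
  else max (((⌊(T : ℝ) * (1 - 1 / Real.exp 1)⌋₊ : ℝ) - (k : ℝ) + 1) /
            ((T : ℝ) - (k : ℝ) + 1)) 0

def MM (T : ℕ) : ℕ := ⌊(T : ℝ) * (1 - 1 / Real.exp 1)⌋₊
lemma one_sub_inv_e_pos : 0 < 1 - 1 / Real.exp 1 := by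
  have h1 : 1 < Real.exp 1 := by
    have := Real.add_one_lt_exp (x := 1) one_ne_zero; linarith
  have : 1 / Real.exp 1 < 1 := by
    rw [div_lt_one (by positivity)]; exact h1
  linarith

lemma MM_lt (T : ℕ) (hT : 1 ≤ T) : MM T < T := by
  have h1 : 1 < Real.exp 1 := by
    have := Real.add_one_lt_exp (x := 1) one_ne_zero; linarith
  have hlt : (T : ℝ) * (1 - 1 / Real.exp 1) < T := by
    have hT' : (0:ℝ) < T := by exact_mod_cast hT
    have : 1 - 1 / Real.exp 1 < 1 := by
      have : 0 < 1 / Real.exp 1 := by positivity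
      linarith
    nlinarith
  exact (Nat.floor_lt (mul_nonneg (Nat.cast_nonneg T) one_sub_inv_e_pos.le)).mpr hlt

lemma supply_zero (T : ℕ) : supply T (0 : Fin 2 → ℕ) = T := by simp [supply]
lemma val_zero (v : Fin 2 → ℕ → ℝ) (i : Fin 2) (k : ℕ) :
    _root_.val v i k (0 : Fin 2 → ℕ) = v i k := by simp [_root_.val]
lemma vT_zero (T k : ℕ) : vT T 0 k = 1 := by simp [vT]
lemma vT_one (T k : ℕ) :
    vT T 1 k = max (((MM T : ℝ) - k + 1) / ((T : ℝ) - k + 1)) 0 := by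
  simp [vT, MM]

lemma vT_nonneg (T : ℕ) (i : Fin 2) (k : ℕ) : 0 ≤ vT T i k := by
  fin_cases i <;> simp only [Fin.mk_zero, Fin.mk_one]
  · rw [vT_zero]; norm_num
  · rw [vT_one]; exact le_max_right _ _

lemma vT_mono (T : ℕ) (hT : 1 ≤ T) (i : Fin 2) (k : ℕ) (hk : 1 ≤ k) (hk2 : k + 1 ≤ T) :
    vT T i (k + 1) ≤ vT T i k := by
  fin_cases i <;> simp only [Fin.mk_zero, Fin.mk_one]
  · rw [vT_zero, vT_zero]
  · rw [vT_one, vT_one]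
    refine max_le_max ?_ le_rfl
    have hM : (MM T : ℝ) ≤ T := by
      exact_mod_cast (MM_lt T hT).le
    have hd1 : (0:ℝ) < (T : ℝ) - k + 1 := by
      have : (k:ℝ) ≤ T := by exact_mod_cast (le_of_lt (Nat.lt_of_succ_le hk2))
      linarith
    have hd2 : (0:ℝ) < (T : ℝ) - (k+1:ℕ) + 1 := by
      have : ((k:ℝ)+1) ≤ T := by exact_mod_cast hk2
      push_cast; linarith
    rw [div_le_div_iff₀ hd2 hd1]
    push_cast
    nlinarith

lemma vT_one_lt_one (T : ℕ) (hT : 1 ≤ T) (m : ℕ) (hm : m ≤ T) : vT T 1 m < 1 := by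
  rw [vT_one]
  have hd : (0:ℝ) < (T : ℝ) - m + 1 := by
    have : (m:ℝ) ≤ T := by exact_mod_cast hm
    linarith
  have hM : (MM T : ℝ) < T := by exact_mod_cast MM_lt T hT
  refine max_lt ?_ one_pos
  rw [div_lt_one hd]; linarith

lemma other_zero : other 0 = 1 := by decide

lemma df_eq (T : ℕ) (hT : 1 ≤ T) : df T (vT T) 0 (0 : Fin 2 → ℕ) = T := by
  have hmem : T ∈ {k | 1 ≤ k ∧ k ≤ supply T (0 : Fin 2 → ℕ) ∧
      _root_.val (vT T) (other 0) (supply T (0 : Fin 2 → ℕ) - k + 1) (0 : Fin 2 → ℕ)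
        < _root_.val (vT T) 0 k (0 : Fin 2 → ℕ)} := by
    refine ⟨hT, by rw [supply_zero], ?_⟩
    rw [other_zero, supply_zero, val_zero, val_zero, vT_zero]
    exact vT_one_lt_one T hT (T - T + 1) (by omega)
  refine IsGreatest.csSup_eq ⟨hmem, ?_⟩
  intro k hk
  rw [supply_zero] at hk
  exact hk.2.1

lemma gbar_eq (T : ℕ) (hT : 1 ≤ T) (k : ℕ) (hk : k ≤ T) :
    gbar T (vT T) 0 k (0 : Fin 2 → ℕ) = min (k : ℝ) ((T : ℝ) - MM T) := by
  have hM : (MM T : ℝ) < T := by exact_mod_cast MM_lt T hT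
  have hsum : (∑ j ∈ Finset.Icc 1 k, _root_.val (vT T) 0 j (0 : Fin 2 → ℕ)) = (k : ℝ) := by
    simp only [val_zero, vT_zero]
    rw [Finset.sum_const, Nat.card_Icc]
    simp
  rw [gbar, hsum, other_zero, supply_zero, val_zero, vT_one]
  rcases Nat.eq_zero_or_pos k with rfl | hk1
  · have h0 : (0:ℝ) ≤ (T:ℝ) - MM T := by linarith
    simp [min_eq_left h0]
  · have hcast : ((T - k + 1 : ℕ) : ℝ) = (T : ℝ) - k + 1 := by
      push_cast [Nat.cast_sub hk]; ring
    rw [hcast]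
    have hden : (T : ℝ) - ((T:ℝ) - k + 1) + 1 = k := by ring
    have hnum : (MM T : ℝ) - ((T:ℝ) - k + 1) + 1 = (MM T : ℝ) - T + k := by ring
    rw [hden, hnum]
    have hkpos : (0:ℝ) < k := by exact_mod_cast hk1
    rw [mul_max_of_nonneg _ _ hkpos.le, mul_div_cancel₀ _ hkpos.ne', mul_zero]
    rcases le_total ((MM T : ℝ) - T + k) 0 with h | h
    · rw [max_eq_right h, min_eq_left (by linarith), sub_zero]
    · rw [max_eq_left h, min_eq_right (by linarith)]
      ring

lemma gu_eq (T : ℕ) (hT : 1 ≤ T) :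
    gu T (vT T) 0 (0 : Fin 2 → ℕ) = (T : ℝ) - MM T := by
  have hM := MM_lt T hT
  apply le_antisymm
  · apply Finset.sup'_le
    intro k hk
    rw [supply_zero] at hk
    rw [gbar_eq T hT k (by simpa using Nat.lt_succ_iff.mp (by simpa using hk))]
    exact min_le_right _ _
  · have hmem : T - MM T ∈ Finset.range (supply T (0 : Fin 2 → ℕ) + 1) := by
      rw [supply_zero]; exact Finset.mem_range.mpr (by omega)
    refine le_trans ?_ (Finset.le_sup' _ hmem)
    rw [gbar_eq T hT (T - MM T) (by omega)]
    rw [Nat.cast_sub hM.le, min_self]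

lemma gd_eq (T : ℕ) (hT : 1 ≤ T) :
    gd T (vT T) 0 (0 : Fin 2 → ℕ) = T - MM T := by
  have hM := MM_lt T hT
  have hMc : ((T - MM T : ℕ) : ℝ) = (T:ℝ) - MM T := Nat.cast_sub hM.le
  have hmem : T - MM T ∈ {k | k ≤ supply T (0 : Fin 2 → ℕ) ∧
      gbar T (vT T) 0 k (0 : Fin 2 → ℕ) = gu T (vT T) 0 (0 : Fin 2 → ℕ)} := by
    refine ⟨by rw [supply_zero]; omega, ?_⟩
    rw [gbar_eq T hT (T - MM T) (by omega), gu_eq T hT, hMc, min_self]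
  apply le_antisymm (Nat.sInf_le hmem)
  refine le_csInf ⟨_, hmem⟩ ?_
  intro k hk
  rw [supply_zero] at hk
  obtain ⟨hk1, hk2⟩ := hk
  rw [gbar_eq T hT k hk1, gu_eq T hT] at hk2
  by_contra hlt
  have : (k:ℝ) < (T:ℝ) - MM T := by
    have : k < T - MM T := by omega
    calc (k:ℝ) < ((T - MM T : ℕ):ℝ) := by exact_mod_cast this
    _ = _ := hMc
  rw [min_eq_left this.le] at hk2
  linarith

lemma sum_one (k : ℕ) (v : Fin 2 → ℕ → ℝ) (h : ∀ j, v 0 j = 1) :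
    (∑ j ∈ Finset.Icc 1 k, _root_.val v 0 j (0 : Fin 2 → ℕ)) = (k : ℝ) := by
  simp only [val_zero, h]
  rw [Finset.sum_const, Nat.card_Icc]
  simp

lemma opt_eq (T : ℕ) (hT : 1 ≤ T) : opt T (vT T) (0 : Fin 2 → ℕ) = (T : ℝ) := by
  apply le_antisymm
  · apply Finset.sup'_le
    intro k hk
    rw [supply_zero] at hk
    have hkT : k ≤ T := Nat.lt_succ_iff.mp (Finset.mem_range.mp hk)
    rw [sw, sum_one k (vT T) (fun j => vT_zero T j), supply_zero]
    have h2 : (∑ i ∈ Finset.Icc 1 (T - k), _root_.val (vT T) 1 i (0 : Fin 2 → ℕ))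
        ≤ ((T - k : ℕ) : ℝ) := by
      calc (∑ i ∈ Finset.Icc 1 (T - k), _root_.val (vT T) 1 i (0 : Fin 2 → ℕ))
          ≤ ∑ i ∈ Finset.Icc 1 (T - k), 1 := by
            refine Finset.sum_le_sum ?_
            intro i hi
            rw [val_zero]
            exact (vT_one_lt_one T hT i (le_trans (Finset.mem_Icc.mp hi).2 (by omega))).le
        _ = ((T - k : ℕ) : ℝ) := by rw [Finset.sum_const, Nat.card_Icc]; simp
    have : ((T - k : ℕ) : ℝ) = (T:ℝ) - k := Nat.cast_sub hkT
    linarith [this ▸ h2]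
  · have hmem : T ∈ Finset.range (supply T (0 : Fin 2 → ℕ) + 1) := by
      rw [supply_zero]; exact Finset.mem_range.mpr (by omega)
    refine le_trans ?_ (Finset.le_sup' _ hmem)
    rw [sw, sum_one T (vT T) (fun j => vT_zero T j), supply_zero]
    simp

lemma harmonic_ub : ∀ (a b : ℕ), 1 ≤ a → a ≤ b →
    (∑ n ∈ Finset.Ioc a b, (1:ℝ)/(n:ℝ)) ≤ Real.log b - Real.log a := by
  intro a b ha hab
  induction b, hab using Nat.le_induction with
  | base => simp
  | succ b hab ih =>
    rw [Finset.sum_Ioc_succ_top (by omega)]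
    have hb : (0:ℝ) < b := by exact_mod_cast (by omega : 0 < b)
    have key : (1:ℝ)/((b:ℝ)+1) ≤ Real.log (b+1) - Real.log b := by
      have h1 : Real.log ((b:ℝ)/((b:ℝ)+1)) ≤ (b:ℝ)/((b:ℝ)+1) - 1 :=
        Real.log_le_sub_one_of_pos (by positivity)
      rw [Real.log_div hb.ne' (by positivity)] at h1
      have : (b:ℝ)/((b:ℝ)+1) - 1 = -(1/((b:ℝ)+1)) := by field_simp; ring
      rw [this] at h1
      linarith
    push_cast
    push_cast at ih
    linarith

lemma harmonic_lb : ∀ (a b : ℕ), 1 ≤ a → a ≤ b →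
    Real.log ((b:ℝ)+1) - Real.log ((a:ℝ)+1) ≤ (∑ n ∈ Finset.Ioc a b, (1:ℝ)/(n:ℝ)) := by
  intro a b ha hab
  induction b, hab using Nat.le_induction with
  | base => simp
  | succ b hab ih =>
    rw [Finset.sum_Ioc_succ_top (by omega)]
    have hb : (0:ℝ) < b := by exact_mod_cast (by omega : 0 < b)
    have key : Real.log ((b:ℝ)+1+1) - Real.log ((b:ℝ)+1) ≤ (1:ℝ)/((b:ℝ)+1) := by
      have h1 : Real.log (((b:ℝ)+1+1)/((b:ℝ)+1)) ≤ ((b:ℝ)+1+1)/((b:ℝ)+1) - 1 :=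
        Real.log_le_sub_one_of_pos (by positivity)
      rw [Real.log_div (by positivity) (by positivity)] at h1
      have h2 : ((b:ℝ)+1+1)/((b:ℝ)+1) - 1 = 1/((b:ℝ)+1) := by field_simp; ring
      linarith [h2 ▸ h1]
    push_cast
    push_cast at ih
    linarith

lemma sum_reindex (T M : ℕ) (hM : M ≤ T) :
    (∑ i ∈ Finset.Icc 1 M, (1:ℝ)/((T:ℝ) - i + 1)) =
      ∑ n ∈ Finset.Ioc (T - M) T, (1:ℝ)/(n:ℝ) := by
  refine Finset.sum_nbij' (fun i => T + 1 - i) (fun n => T + 1 - n) ?_ ?_ ?_ ?_ ?_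
  · intro i hi; rw [Finset.mem_Icc] at hi; rw [Finset.mem_Ioc]; omega
  · intro n hn; rw [Finset.mem_Ioc] at hn; rw [Finset.mem_Icc]; omega
  · intro i hi; rw [Finset.mem_Icc] at hi; omega
  · intro n hn; rw [Finset.mem_Ioc] at hn; omega
  · intro i hi
    rw [Finset.mem_Icc] at hi
    have : ((T + 1 - i : ℕ) : ℝ) = (T:ℝ) + 1 - i := by
      push_cast [Nat.cast_sub (by omega : i ≤ T + 1)]; ring
    rw [this]
    ring_nf

lemma sw_formula (T : ℕ) (hT : 1 ≤ T) :
    sw T (vT T) (T - MM T) (0 : Fin 2 → ℕ) =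
      (T:ℝ) - ((T - MM T : ℕ) : ℝ) * (∑ n ∈ Finset.Ioc (T - MM T) T, (1:ℝ)/(n:ℝ)) := by
  have hM := MM_lt T hT
  have hNc : ((T - MM T : ℕ) : ℝ) = (T:ℝ) - MM T := Nat.cast_sub hM.le
  rw [sw, sum_one (T - MM T) (vT T) (fun j => vT_zero T j), supply_zero]
  have hidx : T - (T - MM T) = MM T := by omega
  rw [hidx]
  have hterm : ∀ i ∈ Finset.Icc 1 (MM T),
      _root_.val (vT T) 1 i (0 : Fin 2 → ℕ) = 1 - ((T:ℝ) - MM T) * (1/((T:ℝ) - i + 1)) := by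
    intro i hi
    rw [Finset.mem_Icc] at hi
    have hiT : i ≤ T := le_trans hi.2 hM.le
    have hd : (0:ℝ) < (T:ℝ) - i + 1 := by
      have : (i:ℝ) ≤ T := by exact_mod_cast hiT
      linarith
    have hn : (0:ℝ) ≤ (MM T : ℝ) - i + 1 := by
      have : (i:ℝ) ≤ MM T := by exact_mod_cast hi.2
      linarith
    rw [val_zero, vT_one, max_eq_left (by positivity)]
    field_simp
    ring
  rw [Finset.sum_congr rfl hterm, Finset.sum_sub_distrib, Finset.sum_const, Nat.card_Icc,
    ← Finset.mul_sum, sum_reindex T (MM T) hM.le, hNc]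
  have hcard : MM T + 1 - 1 = MM T := by omega
  rw [hcard, nsmul_eq_mul]
  ring

lemma exp_one_pos : (0:ℝ) < Real.exp 1 := Real.exp_pos 1

lemma N_lb (T : ℕ) : 1 / Real.exp 1 * T ≤ ((T - MM T : ℕ) : ℝ) := by
  rcases Nat.eq_zero_or_pos T with rfl | hT
  · simp
  have hM := MM_lt T hT
  have hNc : ((T - MM T : ℕ) : ℝ) = (T:ℝ) - MM T := Nat.cast_sub hM.le
  have hfl : (MM T : ℝ) ≤ (T:ℝ) * (1 - 1/Real.exp 1) :=
    Nat.floor_le (mul_nonneg (Nat.cast_nonneg T) one_sub_inv_e_pos.le)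
  rw [hNc]; nlinarith [Nat.cast_nonneg (α := ℝ) T]

lemma N_ub (T : ℕ) (hT : 1 ≤ T) : ((T - MM T : ℕ) : ℝ) < 1 / Real.exp 1 * T + 1 := by
  have hM := MM_lt T hT
  have hNc : ((T - MM T : ℕ) : ℝ) = (T:ℝ) - MM T := Nat.cast_sub hM.le
  have hfl : (T:ℝ) * (1 - 1/Real.exp 1) < (MM T : ℝ) + 1 := Nat.lt_floor_add_one _
  rw [hNc]; nlinarith

lemma tendsto_N_div_T :
    Filter.Tendsto (fun T : ℕ => ((T - MM T : ℕ) : ℝ) / T) Filter.atTop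
      (nhds (1 / Real.exp 1)) := by
  have hub : Filter.Tendsto (fun T : ℕ => 1 / Real.exp 1 + 1 / (T:ℝ)) Filter.atTop
      (nhds (1 / Real.exp 1)) := by
    have := tendsto_const_nhds (x := 1 / Real.exp 1) (f := Filter.atTop (α := ℕ)) |>.add
      tendsto_one_div_atTop_nhds_zero_nat
    simpa using this
  refine tendsto_of_tendsto_of_tendsto_of_le_of_le' tendsto_const_nhds hub ?_ ?_
  · filter_upwards [Filter.eventually_ge_atTop 1] with T hT
    have hTpos : (0:ℝ) < T := by exact_mod_cast hT
    rw [le_div_iff₀ hTpos]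
    exact N_lb T
  · filter_upwards [Filter.eventually_ge_atTop 1] with T hT
    have hTpos : (0:ℝ) < T := by exact_mod_cast hT
    rw [div_le_iff₀ hTpos]
    have hub2 := N_ub T hT
    have hexp : (1 / Real.exp 1 + 1 / (T:ℝ)) * T = 1 / Real.exp 1 * T + 1 := by
      field_simp
    linarith

lemma tendsto_N1_div_T1 :
    Filter.Tendsto (fun T : ℕ => (((T - MM T : ℕ) : ℝ) + 1) / ((T:ℝ) + 1)) Filter.atTop
      (nhds (1 / Real.exp 1)) := by
  have hub : Filter.Tendsto (fun T : ℕ => 1 / Real.exp 1 + 2 / (T:ℝ)) Filter.atTop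
      (nhds (1 / Real.exp 1)) := by
    have h2 : Filter.Tendsto (fun T : ℕ => 2 / (T:ℝ)) Filter.atTop (nhds 0) := by
      have := tendsto_one_div_atTop_nhds_zero_nat.const_mul (2:ℝ)
      simpa [div_eq_mul_inv, mul_comm] using this
    have := tendsto_const_nhds (x := 1 / Real.exp 1) (f := Filter.atTop (α := ℕ)) |>.add h2
    simpa using this
  have he1 : (1:ℝ) ≤ Real.exp 1 := by
    have := Real.add_one_lt_exp (x := 1) one_ne_zero; linarith
  refine tendsto_of_tendsto_of_tendsto_of_le_of_le' tendsto_const_nhds hub ?_ ?_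
  · filter_upwards [Filter.eventually_ge_atTop 1] with T hT
    have hTpos : (0:ℝ) < (T:ℝ) + 1 := by positivity
    rw [le_div_iff₀ hTpos]
    have h1 := N_lb T
    have hinv : 1 / Real.exp 1 ≤ 1 := by
      rw [div_le_one (by positivity)]; exact he1
    nlinarith
  · filter_upwards [Filter.eventually_ge_atTop 1] with T hT
    have hTpos : (0:ℝ) < (T:ℝ) + 1 := by positivity
    have hT1 : (1:ℝ) ≤ T := by exact_mod_cast hT
    rw [div_le_iff₀ hTpos]
    have hub2 := N_ub T hT
    have hinvpos : 0 < 1 / Real.exp 1 := by positivity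
    have h2T : 0 ≤ 2 / (T:ℝ) := by positivity
    have hexp : (1 / Real.exp 1 + 2 / (T:ℝ)) * ((T:ℝ) + 1)
        = 1 / Real.exp 1 * T + 1 / Real.exp 1 + 2 + 2 / (T:ℝ) := by
      field_simp; ring
    linarith

lemma log_inv_e : Real.log (1 / Real.exp 1) = -1 := by
  rw [one_div, Real.log_inv, Real.log_exp]

lemma tendsto_H :
    Filter.Tendsto (fun T : ℕ => ∑ n ∈ Finset.Ioc (T - MM T) T, (1:ℝ)/(n:ℝ))
      Filter.atTop (nhds 1) := by
  have hcont : ContinuousAt Real.log (1 / Real.exp 1) :=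
    Real.continuousAt_log (by positivity)
  have hlow : Filter.Tendsto
      (fun T : ℕ => Real.log ((T:ℝ) + 1) - Real.log (((T - MM T : ℕ) : ℝ) + 1))
      Filter.atTop (nhds 1) := by
    have hcomp := hcont.tendsto.comp tendsto_N1_div_T1
    have : Filter.Tendsto
        (fun T : ℕ => -Real.log ((((T - MM T : ℕ) : ℝ) + 1) / ((T:ℝ) + 1)))
        Filter.atTop (nhds 1) := by
      have := hcomp.neg
      rw [log_inv_e] at this
      simpa using this
    refine this.congr ?_
    intro T
    rw [Real.log_div (by positivity) (by positivity)]
    ring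
  have hup : Filter.Tendsto
      (fun T : ℕ => Real.log (T:ℝ) - Real.log ((T - MM T : ℕ) : ℝ))
      Filter.atTop (nhds 1) := by
    have hcomp := hcont.tendsto.comp tendsto_N_div_T
    have h2 : Filter.Tendsto
        (fun T : ℕ => -Real.log (((T - MM T : ℕ) : ℝ) / (T:ℝ)))
        Filter.atTop (nhds 1) := by
      have := hcomp.neg
      rw [log_inv_e] at this
      simpa using this
    refine h2.congr' ?_
    filter_upwards [Filter.eventually_ge_atTop 1] with T hT
    have hM := MM_lt T hT
    have hN : (0:ℝ) < ((T - MM T : ℕ) : ℝ) := by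
      have : 0 < T - MM T := by omega
      exact_mod_cast this
    have hTpos : (0:ℝ) < T := by exact_mod_cast hT
    rw [Real.log_div hN.ne' hTpos.ne']
    ring
  refine tendsto_of_tendsto_of_tendsto_of_le_of_le' hlow hup ?_ ?_
  · filter_upwards [Filter.eventually_ge_atTop 1] with T hT
    have hM := MM_lt T hT
    have h := harmonic_lb (T - MM T) T (by omega) (by omega)
    convert h using 2 <;> push_cast <;> ring_nf
  · filter_upwards [Filter.eventually_ge_atTop 1] with T hT
    have hM := MM_lt T hT
    exact harmonic_ub (T - MM T) T (by omega) (by omega)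

/-- Tightness of the `1 - 1/e` price of anarchy bound. -/
theorem stmt19 :
    (∀ T : ℕ, 1 ≤ T →
      (∀ i : Fin 2, ∀ k : ℕ, 1 ≤ k → k ≤ T → 0 ≤ vT T i k) ∧
      (∀ i : Fin 2, ∀ k : ℕ, 1 ≤ k → k + 1 ≤ T → vT T i (k + 1) ≤ vT T i k) ∧
      df T (vT T) 0 (0 : Fin 2 → ℕ) = T ∧
      gd T (vT T) 0 (0 : Fin 2 → ℕ) = T - ⌊(T : ℝ) * (1 - 1 / Real.exp 1)⌋₊ ∧
      opt T (vT T) (0 : Fin 2 → ℕ) = (T : ℝ)) ∧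
    Filter.Tendsto
      (fun T : ℕ => sw T (vT T) (gd T (vT T) 0 (0 : Fin 2 → ℕ)) (0 : Fin 2 → ℕ) / (T : ℝ))
      Filter.atTop (nhds (1 - 1 / Real.exp 1)) := by
  constructor
  · intro T hT
    refine ⟨fun i k _ _ => vT_nonneg T i k, fun i k hk hk2 => vT_mono T hT i k hk hk2,
      df_eq T hT, ?_, opt_eq T hT⟩
    show gd T (vT T) 0 (0 : Fin 2 → ℕ) = T - MM T
    exact gd_eq T hT
  · have key := ((tendsto_const_nhds (x := (1:ℝ)) (f := Filter.atTop (α := ℕ))).sub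
      ((tendsto_N_div_T).mul tendsto_H))
    rw [mul_one] at key
    refine key.congr' ?_
    filter_upwards [Filter.eventually_ge_atTop 1] with T hT
    rw [gd_eq T hT, sw_formula T hT]
    have hTpos : (0:ℝ) < T := by exact_mod_cast hT
    field_simp
end
end
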